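/- If a temporal walk from s to z contains a cycle (revisits a vertex), then deleting the edges of that cycle yields a valid temporal walk from s to z whose cost is at most the original cost, whose arrival time equals the original arrival time, and whose starting time is at least the original starting time; if all edge costs are strictly positive, the resulting cost is strictly smaller. -/

import Mathlib

/-- A weighted temporal edge: source, destination, availability time,
traversal time, and real cost. -/
structure TEdge (V : Type) where
  src : V
  dst : V
  time : ℕ
  lam : ℕ
  cost : ℝ

variable {V : Type}

/-- Temporal compatibility of consecutive edges. -/
def TEdge.Compat (e f : TEdge V) : Prop := e.dst = f.src ∧ e.time + e.lam ≤ f.time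

/-- A temporal (s,z)-walk in the edge set `E`. -/
def IsWalk (E : Set (TEdge V)) (s z : V) (P : List (TEdge V)) : Prop :=
  P ≠ [] ∧ (∀ e ∈ P, e ∈ E) ∧ P.Chain' TEdge.Compat ∧
  (∀ e, P.head? = some e → e.src = s) ∧ (∀ e, P.getLast? = some e → e.dst = z)

/-- The sequence of vertices visited by a walk. -/
def visitedVerts (P : List (TEdge V)) : List V :=
  (P.head?.elim [] fun e => [e.src]) ++ P.map TEdge.dst

/-- A temporal path: a simple temporal walk. -/
def IsPath (E : Set (TEdge V)) (s z : V) (P : List (TEdge V)) : Prop :=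
  IsWalk E s z P ∧ (visitedVerts P).Nodup

/-- Cost of a walk. -/
noncomputable def wcost (P : List (TEdge V)) : ℝ := (P.map TEdge.cost).sum

/-- Arrival time of a walk. -/
def warr (P : List (TEdge V)) : ℕ := P.getLast?.elim 0 fun e => e.time + e.lam

/-- Starting time of a walk. -/
def wstart (P : List (TEdge V)) : ℕ := P.head?.elim 0 fun e => e.time

/-- Duration of a walk. -/
def wdur (P : List (TEdge V)) : ℕ := warr P - wstart P

/-- `Q` dominates `P` w.r.t. cost and the temporal objective `f`. -/
def Dominates (f : List (TEdge V) → ℕ) (Q P : List (TEdge V)) : Prop :=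
  (wcost Q < wcost P ∧ f Q ≤ f P) ∨ (wcost Q ≤ wcost P ∧ f Q < f P)

/-- `P` is efficient within the set `X` w.r.t. cost and objective `f`. -/
def EfficientIn (X : Set (List (TEdge V))) (f : List (TEdge V) → ℕ) (P : List (TEdge V)) : Prop :=
  P ∈ X ∧ ∀ Q ∈ X, ¬ Dominates f Q P

/-- deleting a (non-final) cycle from a temporal walk yields a
temporal walk with at most the cost, the same arrival time and a
later-or-equal starting time; strictly smaller cost if costs are positive. -/
private lemma time_mono : ∀ (C : List (TEdge V)), C.Chain' TEdge.Compat →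
    ∀ e f, C.head? = some e → C.getLast? = some f → e.time ≤ f.time
  | [], _, e, f, he, _ => by simp at he
  | [a], _, e, f, he, hf => by
      simp only [List.head?_cons, List.getLast?_singleton, Option.some.injEq] at he hf
      subst he; subst hf; exact le_refl _
  | a :: b :: l, hch, e, f, he, hf => by
      simp only [List.head?_cons, Option.some.injEq] at he
      cases he
      unfold List.Chain' at hch
      rw [List.isChain_cons_cons] at hch
      have h1 : a.time ≤ b.time := le_trans (Nat.le_add_right _ _) hch.1.2
      have h2 : b.time ≤ f.time := time_mono (b :: l) hch.2 b f rfl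
        (by rw [← hf, List.getLast?_cons_cons])
      exact le_trans h1 h2

theorem stmt1 (E : Set (TEdge V)) (s z : V) (A C B : List (TEdge V))
    (hC : C ≠ []) (hB : B ≠ [])
    (hcyc : ∀ e f, C.head? = some e → C.getLast? = some f → e.src = f.dst)
    (hnn : ∀ e ∈ E, 0 ≤ e.cost)
    (hW : IsWalk E s z (A ++ C ++ B)) :
    IsWalk E s z (A ++ B) ∧
    wcost (A ++ B) ≤ wcost (A ++ C ++ B) ∧
    warr (A ++ B) = warr (A ++ C ++ B) ∧
    wstart (A ++ C ++ B) ≤ wstart (A ++ B) ∧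
    ((∀ e ∈ E, 0 < e.cost) → wcost (A ++ B) < wcost (A ++ C ++ B)) := by
  obtain ⟨c0, C', rfl⟩ := List.exists_cons_of_ne_nil hC
  obtain ⟨b0, B', rfl⟩ := List.exists_cons_of_ne_nil hB
  set C := c0 :: C' with hCdef
  set B := b0 :: B' with hBdef
  obtain ⟨cl, hcl⟩ : ∃ cl, C.getLast? = some cl := ⟨C.getLast (by simp [hCdef]), List.getLast?_eq_getLast _⟩
  obtain ⟨hne, hmem, hchain, hhead, hlast⟩ := hW
  rw [List.append_assoc] at hchain
  unfold List.Chain' at hchain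
  rw [List.isChain_append] at hchain
  obtain ⟨hchA, hchCB, hAC⟩ := hchain
  rw [List.isChain_append] at hchCB
  obtain ⟨hchC, hchB, hCB⟩ := hchCB
  -- key temporal facts
  have hCBr : TEdge.Compat cl b0 := hCB cl hcl b0 rfl
  have htm : c0.time ≤ cl.time := time_mono C hchC c0 cl rfl hcl
  have hsrc : c0.src = cl.dst := hcyc c0 cl rfl hcl
  have hbridge : ∀ x ∈ A.getLast?, TEdge.Compat x b0 := by
    intro x hx
    have h1 : TEdge.Compat x c0 := hAC x hx c0 rfl
    refine ⟨h1.1.trans (hsrc.trans hCBr.1), ?_⟩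
    calc x.time + x.lam ≤ c0.time := h1.2
      _ ≤ cl.time + cl.lam := le_trans htm (Nat.le_add_right _ _)
      _ ≤ b0.time := hCBr.2
  have hchainAB : (A ++ B).Chain' TEdge.Compat := by
    refine List.isChain_append.2 ⟨hchA, hchB, fun x hx y hy => ?_⟩
    simp only [hBdef, List.head?_cons, Option.mem_def, Option.some.injEq] at hy
    subst hy
    exact hbridge x hx
  have hWalk : IsWalk E s z (A ++ B) := by
    refine ⟨by simp [hBdef], fun e he => hmem e (by simp at he ⊢; tauto), hchainAB, ?_, ?_⟩
    · intro e he
      match A, hhead, he with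
      | [], hhead, he =>
        simp only [List.nil_append, hBdef, List.head?_cons, Option.some.injEq] at he
        subst he
        have := hhead c0 (by simp [hCdef])
        rw [← hCBr.1, ← hsrc, this]
      | a0 :: A', hhead, he =>
        have hA : a0 :: A' ≠ [] := by simp
        rw [List.head?_append_of_ne_nil _ hA] at he
        exact hhead e (by rw [List.append_assoc, List.head?_append_of_ne_nil _ hA]; exact he)
    · intro e he
      rw [List.getLast?_append_of_ne_nil _ (by simp [hBdef])] at he
      exact hlast e (by rw [List.getLast?_append_of_ne_nil _ (by simp [hBdef])]; exact he)
  have hcostsplit : wcost (A ++ C ++ B) = wcost A + wcost C + wcost B := by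
    simp [wcost, List.map_append, List.sum_append]; ring
  have hcostAB : wcost (A ++ B) = wcost A + wcost B := by
    simp [wcost, List.map_append, List.sum_append]
  have hCmem : ∀ e ∈ C, e ∈ E := fun e he => hmem e (by simp; tauto)
  have hCnn : 0 ≤ wcost C := by
    apply List.sum_nonneg
    intro x hx
    simp only [List.mem_map] at hx
    obtain ⟨e, he, rfl⟩ := hx
    exact hnn e (hCmem e he)
  refine ⟨hWalk, ?_, ?_, ?_, ?_⟩
  · rw [hcostsplit, hcostAB]; linarith
  · unfold warr
    rw [List.getLast?_append_of_ne_nil _ (show B ≠ [] by simp [hBdef]),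
      List.append_assoc, List.getLast?_append_of_ne_nil _
        (show C ++ B ≠ [] by simp [hCdef]),
      List.getLast?_append_of_ne_nil _ (show B ≠ [] by simp [hBdef])]
  · unfold wstart
    match A with
    | [] =>
      simp only [List.nil_append, hBdef, hCdef]
      simp only [List.head?_append_of_ne_nil _ (show c0 :: C' ≠ [] by simp)]
      simp only [List.head?_cons, Option.elim]
      calc c0.time ≤ cl.time := htm
        _ ≤ cl.time + cl.lam := Nat.le_add_right _ _
        _ ≤ b0.time := hCBr.2
    | a0 :: A' =>
      have hA : a0 :: A' ≠ [] := by simp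
      rw [List.head?_append_of_ne_nil _ hA, List.append_assoc,
        List.head?_append_of_ne_nil _ hA]
  · intro hpos
    rw [hcostsplit, hcostAB]
    have : 0 < wcost C := by
      have h0 : 0 < c0.cost := hpos c0 (hCmem c0 (by simp [hCdef]))
      have hrest : 0 ≤ wcost C' := by
        apply List.sum_nonneg
        intro x hx
        simp only [List.mem_map] at hx
        obtain ⟨e, he, rfl⟩ := hx
        exact hnn e (hCmem e (by simp [hCdef, he]))
      have : wcost C = c0.cost + wcost C' := by simp [wcost, hCdef]
      linarith
    linarith
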